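/- Let $d \geq 1$, $\kappa \in (2,d)$, and let $R : \mathbb{R}^d \to \mathbb{R}$ satisfy $0 \le R(x) \le C(1+|x|)^{-\kappa}$. Let $P_t(x) = (2\pi t)^{-d/2} e^{-|x|^2/(2t)}$ be the heat kernel. Then there is a constant $C' > 0$ such that for all $t > 0$ and $x \in \mathbb{R}^d$, $\int_{\mathbb{R}^d} P_t(x-z) R(z)\,dz \le C' (1+|x|+\sqrt{t})^{-\kappa}$. -/

import Mathlib

open MeasureTheory Real Set
set_option maxHeartbeats 1000000

lemma aux_exp_bound (p : ℝ) (hp : 0 ≤ p) :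
    ∃ K : ℝ, 1 ≤ K ∧ ∀ s : ℝ, 0 ≤ s → s ^ p * Real.exp (-s) ≤ K := by
  refine ⟨(Nat.ceil p).factorial, by exact_mod_cast Nat.one_le_iff_ne_zero.mpr (Nat.factorial_ne_zero _), ?_⟩
  intro s hs
  rcases le_or_gt s 1 with h1 | h1
  · have e1 : s ^ p ≤ 1 := Real.rpow_le_one hs h1 hp
    have e2 : Real.exp (-s) ≤ 1 := Real.exp_le_one_iff.mpr (neg_nonpos.mpr hs)
    have e3 : s ^ p * Real.exp (-s) ≤ 1 := by
      calc s ^ p * Real.exp (-s) ≤ 1 * 1 :=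
            mul_le_mul e1 e2 (Real.exp_nonneg _) zero_le_one
        _ = 1 := one_mul 1
    exact e3.trans (by exact_mod_cast Nat.one_le_iff_ne_zero.mpr (Nat.factorial_ne_zero _))
  · have h2 : s ^ p ≤ s ^ (Nat.ceil p : ℕ) := by
      rw [← Real.rpow_natCast]
      exact Real.rpow_le_rpow_of_exponent_le h1.le (Nat.le_ceil p)
    have h3 : s ^ (Nat.ceil p : ℕ) ≤ (Nat.ceil p).factorial * Real.exp s := by
      have := Real.pow_div_factorial_le_exp s hs (Nat.ceil p)
      rw [div_le_iff₀ (by positivity)] at this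
      linarith [this]
    calc s ^ p * Real.exp (-s) ≤ s ^ (Nat.ceil p : ℕ) * Real.exp (-s) :=
          mul_le_mul_of_nonneg_right h2 (Real.exp_nonneg _)
      _ ≤ ((Nat.ceil p).factorial * Real.exp s) * Real.exp (-s) :=
          mul_le_mul_of_nonneg_right h3 (Real.exp_nonneg _)
      _ = (Nat.ceil p).factorial := by
          rw [mul_assoc, ← Real.exp_add, add_neg_cancel, Real.exp_zero, mul_one]

lemma aux_ball_integral (d : ℕ) (hd : 1 ≤ d) (κ : ℝ) (hκ0 : 0 < κ) (hκd : κ < d)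
    (ρ : ℝ) (hρ : 0 < ρ) :
    ∫ z in Metric.ball (0 : EuclideanSpace ℝ (Fin d)) ρ, (1 + ‖z‖) ^ (-κ) ≤
      ((d : ℝ) * (volume (Metric.ball (0 : EuclideanSpace ℝ (Fin d)) 1)).toReal / ((d : ℝ) - κ))
        * ρ ^ ((d : ℝ) - κ) := by
  haveI : Nonempty (Fin d) := ⟨⟨0, hd⟩⟩
  haveI : Nontrivial (EuclideanSpace ℝ (Fin d)) := inferInstance
  have hdim : Module.finrank ℝ (EuclideanSpace ℝ (Fin d)) = d := finrank_euclideanSpace_fin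
  set F : ℝ → ℝ := Set.indicator (Iio ρ) (fun y : ℝ => (1 + y) ^ (-κ)) with hF
  have step1 : ∫ z in Metric.ball (0 : EuclideanSpace ℝ (Fin d)) ρ, (1 + ‖z‖) ^ (-κ)
      = ∫ z : EuclideanSpace ℝ (Fin d), F ‖z‖ := by
    rw [← integral_indicator measurableSet_ball]
    congr 1
    funext z
    by_cases h : ‖z‖ < ρ <;>
      simp [hF, Set.indicator, mem_ball_zero_iff, h]
  have step2 : ∫ z : EuclideanSpace ℝ (Fin d), F ‖z‖
      = (d : ℝ) * (volume (Metric.ball (0 : EuclideanSpace ℝ (Fin d)) 1)).toReal *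
        ∫ y in Ioi (0:ℝ), y ^ (d - 1) * F y := by
    rw [integral_fun_norm_addHaar volume F, hdim]
    simp only [nsmul_eq_mul, smul_eq_mul, mul_assoc]
    rfl
  have step3 : ∫ y in Ioi (0:ℝ), y ^ (d - 1) * F y
      = ∫ y in Ioo (0:ℝ) ρ, y ^ (d - 1) * (1 + y) ^ (-κ) := by
    have e : ∀ y : ℝ, y ^ (d - 1) * F y
        = Set.indicator (Iio ρ) (fun y : ℝ => y ^ (d - 1) * (1 + y) ^ (-κ)) y := by
      intro y
      by_cases h : y ∈ Iio ρ <;> simp [hF, Set.indicator, h]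
    simp_rw [e]
    rw [integral_indicator measurableSet_Iio, Measure.restrict_restrict measurableSet_Iio,
      Set.Iio_inter_Ioi]
  have hint1 : IntegrableOn (fun y : ℝ => y ^ (d - 1) * (1 + y) ^ (-κ)) (Ioo (0:ℝ) ρ) := by
    apply (ContinuousOn.integrableOn_compact isCompact_Icc ?_).mono_set Ioo_subset_Icc_self
    apply ContinuousOn.mul (continuous_pow _).continuousOn
    apply ContinuousOn.rpow_const ((continuous_const.add continuous_id).continuousOn)
    intro y hy
    left
    have : (0:ℝ) ≤ y := hy.1
    show (1:ℝ) + y ≠ 0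
    positivity
  have hint2 : IntegrableOn (fun y : ℝ => y ^ ((d : ℝ) - 1 - κ)) (Ioo (0:ℝ) ρ) := by
    have h := intervalIntegral.intervalIntegrable_rpow' (a := (0:ℝ)) (b := ρ)
      (show (-1:ℝ) < (d : ℝ) - 1 - κ by
        have : (1:ℝ) ≤ (d:ℝ) := by exact_mod_cast hd
        linarith)
    rw [intervalIntegrable_iff_integrableOn_Ioc_of_le hρ.le] at h
    exact h.mono_set Ioo_subset_Ioc_self
  have step4 : ∫ y in Ioo (0:ℝ) ρ, y ^ (d - 1) * (1 + y) ^ (-κ)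
      ≤ ∫ y in Ioo (0:ℝ) ρ, y ^ ((d : ℝ) - 1 - κ) := by
    apply setIntegral_mono_on hint1 hint2 measurableSet_Ioo
    intro y hy
    have hy0 : (0:ℝ) < y := hy.1
    have h1 : (1 + y) ^ (-κ) ≤ y ^ (-κ) :=
      Real.rpow_le_rpow_of_nonpos hy0 (by linarith) (neg_nonpos.mpr hκ0.le)
    calc y ^ (d - 1) * (1 + y) ^ (-κ) ≤ y ^ (d - 1) * y ^ (-κ) :=
          mul_le_mul_of_nonneg_left h1 (pow_nonneg hy0.le _)
      _ = y ^ ((d : ℝ) - 1 - κ) := by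
          rw [← Real.rpow_natCast y (d - 1), ← Real.rpow_add hy0]
          congr 1
          have : ((d - 1 : ℕ) : ℝ) = (d : ℝ) - 1 := by
            push_cast [Nat.cast_sub hd]
            ring
          rw [this]; ring
  have step5 : ∫ y in Ioo (0:ℝ) ρ, y ^ ((d : ℝ) - 1 - κ)
      = ρ ^ ((d : ℝ) - κ) / ((d : ℝ) - κ) := by
    rw [← integral_Ioc_eq_integral_Ioo, ← intervalIntegral.integral_of_le hρ.le,
      integral_rpow (Or.inl (show (-1:ℝ) < (d : ℝ) - 1 - κ by
        have : (1:ℝ) ≤ (d:ℝ) := by exact_mod_cast hd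
        linarith))]
    have hne : (d : ℝ) - 1 - κ + 1 ≠ 0 := by
      intro h; apply absurd hκd; push_neg; nlinarith [h]
    rw [Real.zero_rpow hne]
    ring_nf
  rw [step1, step2, step3]
  have hnn : 0 ≤ (d : ℝ) * (volume (Metric.ball (0 : EuclideanSpace ℝ (Fin d)) 1)).toReal := by
    positivity
  calc (d : ℝ) * (volume (Metric.ball (0 : EuclideanSpace ℝ (Fin d)) 1)).toReal *
        ∫ y in Ioo (0:ℝ) ρ, y ^ (d - 1) * (1 + y) ^ (-κ)
      ≤ (d : ℝ) * (volume (Metric.ball (0 : EuclideanSpace ℝ (Fin d)) 1)).toReal *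
        (ρ ^ ((d : ℝ) - κ) / ((d : ℝ) - κ)) := by
        rw [← step5]
        exact mul_le_mul_of_nonneg_left step4 hnn
    _ = _ := by ring

noncomputable def heatKernel (d : ℕ) (t : ℝ) (x : EuclideanSpace ℝ (Fin d)) : ℝ :=
  (2 * Real.pi * t) ^ (-(d : ℝ) / 2) * Real.exp (-‖x‖ ^ 2 / (2 * t))

lemma heat_nonneg (d : ℕ) (t : ℝ) (ht : 0 < t) (x : EuclideanSpace ℝ (Fin d)) :
    0 ≤ heatKernel d t x := by
  unfold heatKernel
  have h : (0:ℝ) < 2 * Real.pi * t := by positivity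
  positivity

lemma gauss_integrable (d : ℕ) (t : ℝ) (ht : 0 < t) :
    Integrable (fun v : EuclideanSpace ℝ (Fin d) => Real.exp (-‖v‖ ^ 2 / (2 * t))) := by
  have hb : (0:ℝ) < (2 * t)⁻¹ := by positivity
  have h := (GaussianFourier.integrable_cexp_neg_mul_sq_norm_add (V := EuclideanSpace ℝ (Fin d))
    (b := ((2 * t)⁻¹ : ℂ)) (by simpa using hb) 0 0).norm
  apply h.congr
  filter_upwards with v
  simp only [zero_mul, add_zero, Complex.norm_exp]
  have e : (-((2 * t)⁻¹ : ℂ) * (‖v‖:ℂ) ^ 2) = ((-(2 * t)⁻¹ * ‖v‖ ^ 2 : ℝ) : ℂ) := by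
    push_cast; ring
  rw [e, Complex.ofReal_re]
  congr 1
  field_simp

lemma heat_integrable (d : ℕ) (t : ℝ) (ht : 0 < t) (x : EuclideanSpace ℝ (Fin d)) :
    Integrable (fun z : EuclideanSpace ℝ (Fin d) => heatKernel d t (x - z)) := by
  unfold heatKernel
  exact (((gauss_integrable d t ht).comp_sub_left x).const_mul _)

lemma heat_mass (d : ℕ) (t : ℝ) (ht : 0 < t) (x : EuclideanSpace ℝ (Fin d)) :
    ∫ z : EuclideanSpace ℝ (Fin d), heatKernel d t (x - z) = 1 := by
  unfold heatKernel
  rw [MeasureTheory.integral_const_mul]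
  rw [integral_sub_left_eq_self (fun z : EuclideanSpace ℝ (Fin d) =>
    Real.exp (-‖z‖ ^ 2 / (2 * t))) volume x]
  have hb : (0:ℝ) < (2 * t)⁻¹ := by positivity
  have h := GaussianFourier.integral_rexp_neg_mul_sq_norm (V := EuclideanSpace ℝ (Fin d)) hb
  have e : ∀ v : EuclideanSpace ℝ (Fin d), -‖v‖ ^ 2 / (2 * t) = -(2 * t)⁻¹ * ‖v‖ ^ 2 := by
    intro v; field_simp
  simp_rw [e, h, finrank_euclideanSpace_fin]
  have hπ : Real.pi / (2 * t)⁻¹ = 2 * Real.pi * t := by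
    field_simp
  rw [hπ, ← Real.rpow_add (by positivity),
    show (-(d:ℝ)/2 + (d:ℝ)/2) = 0 by ring, Real.rpow_zero]

theorem stmt0 (d : ℕ) (hd : 1 ≤ d) (κ : ℝ) (hκ : 2 < κ ∧ κ < d)
    (R : EuclideanSpace ℝ (Fin d) → ℝ) (C : ℝ)
    (hR : ∀ x, 0 ≤ R x ∧ R x ≤ C * (1 + ‖x‖) ^ (-κ)) :
    ∃ C' > 0, ∀ t > (0 : ℝ), ∀ x : EuclideanSpace ℝ (Fin d),
      (∫ z, heatKernel d t (x - z) * R z) ≤ C' * (1 + ‖x‖ + Real.sqrt t) ^ (-κ) := by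
  obtain ⟨hκ2, hκd⟩ := hκ
  have hκ0 : (0:ℝ) < κ := by linarith
  have hC : 0 ≤ C := by
    have h := le_trans (hR 0).1 (hR 0).2
    simpa using h
  obtain ⟨K, hK1, hK⟩ := aux_exp_bound ((d:ℝ)/2) (by positivity)
  set Vb : ℝ := (volume (Metric.ball (0 : EuclideanSpace ℝ (Fin d)) 1)).toReal with hVb
  have hVb0 : 0 ≤ Vb := ENNReal.toReal_nonneg
  set Cb : ℝ := (d : ℝ) * Vb / ((d : ℝ) - κ) with hCb
  have hCb0 : 0 ≤ Cb := div_nonneg (by positivity) (by linarith)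
  have h2κ : (0:ℝ) ≤ (2:ℝ) ^ κ := Real.rpow_nonneg (by norm_num) _
  have h4κ : (0:ℝ) ≤ (4:ℝ) ^ κ := Real.rpow_nonneg (by norm_num) _
  have h2π : (0:ℝ) ≤ (2 * π) ^ (-(d:ℝ)/2) := Real.rpow_nonneg (by positivity) _
  have h8d : (0:ℝ) ≤ (8:ℝ) ^ ((d:ℝ)/2) := Real.rpow_nonneg (by norm_num) _
  set A1 : ℝ := C * 2 ^ κ + (2 * π) ^ (-(d:ℝ)/2) * (C * Cb) * 2 ^ κ with hA1
  set A2 : ℝ := C * 4 ^ κ with hA2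
  set A3 : ℝ := C * 4 ^ κ + (2 * π) ^ (-(d:ℝ)/2) * (8:ℝ) ^ ((d:ℝ)/2) * K * (C * Cb) * 4 ^ κ
    with hA3
  have hA1nn : 0 ≤ A1 := by positivity
  have hA2nn : 0 ≤ A2 := by positivity
  have hA3nn : 0 ≤ A3 := by
    have : (0:ℝ) ≤ K := by linarith
    positivity
  refine ⟨A1 + A2 + A3 + 1, by linarith, ?_⟩
  intro t ht x
  set u : ℝ := Real.sqrt t with hu
  have hu0 : 0 < u := Real.sqrt_pos.mpr ht
  set a : ℝ := 1 + ‖x‖ + u with ha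
  have ha0 : (0:ℝ) < a := by have := norm_nonneg x; linarith
  have haκ : (0:ℝ) ≤ a ^ (-κ) := Real.rpow_nonneg ha0.le _
  set g : EuclideanSpace ℝ (Fin d) → ℝ := fun z => C * (1 + ‖z‖) ^ (-κ) with hg
  set P : EuclideanSpace ℝ (Fin d) → ℝ := fun z => heatKernel d t (x - z) with hP
  have hP_int : Integrable P := heat_integrable d t ht x
  have hP_nn : ∀ z, 0 ≤ P z := fun z => heat_nonneg d t ht (x - z)
  have hg_nn : ∀ z, 0 ≤ g z := fun z =>
    mul_nonneg hC (Real.rpow_nonneg (by positivity) _)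
  have hg_le : ∀ z, g z ≤ C := by
    intro z
    have h1 : (1 + ‖z‖ : ℝ) ^ (-κ) ≤ 1 :=
      Real.rpow_le_one_of_one_le_of_nonpos (by linarith [norm_nonneg z]) (by linarith)
    calc g z ≤ C * 1 := mul_le_mul_of_nonneg_left h1 hC
      _ = C := mul_one _
  have hg_cont : Continuous g := by
    apply continuous_const.mul
    apply Continuous.rpow_const (continuous_const.add continuous_norm)
    intro z
    left
    have := norm_nonneg z
    show (1:ℝ) + ‖z‖ ≠ 0
    positivity
  have hfg_int : Integrable (fun z => P z * g z) := by
    have h := hP_int.bdd_mul hg_cont.aestronglyMeasurable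
      (ae_of_all _ fun z => by rw [Real.norm_eq_abs, abs_of_nonneg (hg_nn z)]; exact hg_le z)
    have h2 : (fun z => g z * P z) = fun z => P z * g z := by funext z; ring
    rwa [h2] at h
  have step0 : (∫ z, heatKernel d t (x - z) * R z) ≤ ∫ z, P z * g z := by
    apply integral_mono_of_nonneg
    · exact ae_of_all _ fun z => mul_nonneg (hP_nn z) (hR z).1
    · exact hfg_int
    · exact ae_of_all _ fun z => mul_le_mul_of_nonneg_left (hR z).2 (hP_nn z)
  refine step0.trans ?_
  -- split lemma
  have split : ∀ ρ : ℝ, 0 < ρ → ∀ M : ℝ, 0 ≤ M →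
      (∀ z : EuclideanSpace ℝ (Fin d), ‖z‖ < ρ → P z ≤ M) →
      (∫ z, P z * g z) ≤ C * (1 + ρ) ^ (-κ) + M * C * (Cb * ρ ^ ((d:ℝ) - κ)) := by
    intro ρ hρ M hM hM2
    have hs : MeasurableSet (Metric.ball (0 : EuclideanSpace ℝ (Fin d)) ρ) :=
      measurableSet_ball
    rw [← integral_add_compl hs hfg_int]
    have hnear : (∫ z in Metric.ball (0 : EuclideanSpace ℝ (Fin d)) ρ, P z * g z)
        ≤ M * C * (Cb * ρ ^ ((d:ℝ) - κ)) := by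
      have hcont2 : Continuous fun z : EuclideanSpace ℝ (Fin d) =>
          M * C * (1 + ‖z‖) ^ (-κ) := by
        apply continuous_const.mul
        apply Continuous.rpow_const (continuous_const.add continuous_norm)
        intro z; left; have := norm_nonneg z; show (1:ℝ) + ‖z‖ ≠ 0; positivity
      have hInd : IntegrableOn (fun z : EuclideanSpace ℝ (Fin d) => M * C * (1 + ‖z‖) ^ (-κ))
          (Metric.ball (0 : EuclideanSpace ℝ (Fin d)) ρ) :=
        (hcont2.continuousOn.integrableOn_compact (isCompact_closedBall 0 ρ)).mono_set
          Metric.ball_subset_closedBall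
      have hmono : (∫ z in Metric.ball (0 : EuclideanSpace ℝ (Fin d)) ρ, P z * g z)
          ≤ ∫ z in Metric.ball (0 : EuclideanSpace ℝ (Fin d)) ρ, M * C * (1 + ‖z‖) ^ (-κ) := by
        apply setIntegral_mono_on hfg_int.integrableOn hInd hs
        intro z hz
        rw [mem_ball_zero_iff] at hz
        calc P z * g z ≤ M * g z := mul_le_mul_of_nonneg_right (hM2 z hz) (hg_nn z)
          _ = M * C * (1 + ‖z‖) ^ (-κ) := by rw [hg]; ring
      refine hmono.trans ?_
      have e1 : (∫ z in Metric.ball (0 : EuclideanSpace ℝ (Fin d)) ρ, M * C * (1 + ‖z‖) ^ (-κ))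
          = M * C * ∫ z in Metric.ball (0 : EuclideanSpace ℝ (Fin d)) ρ, (1 + ‖z‖) ^ (-κ) :=
        MeasureTheory.integral_const_mul _ _
      rw [e1]
      have hball := aux_ball_integral d hd κ hκ0 hκd ρ hρ
      rw [← hVb, ← hCb] at hball
      exact mul_le_mul_of_nonneg_left hball (mul_nonneg hM hC)
    have hfar : (∫ z in (Metric.ball (0 : EuclideanSpace ℝ (Fin d)) ρ)ᶜ, P z * g z)
        ≤ C * (1 + ρ) ^ (-κ) := by
      have hint2 : IntegrableOn (fun z => (C * (1 + ρ) ^ (-κ)) * P z)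
          (Metric.ball (0 : EuclideanSpace ℝ (Fin d)) ρ)ᶜ :=
        (hP_int.const_mul _).integrableOn
      have hstep : (∫ z in (Metric.ball (0 : EuclideanSpace ℝ (Fin d)) ρ)ᶜ, P z * g z)
          ≤ ∫ z in (Metric.ball (0 : EuclideanSpace ℝ (Fin d)) ρ)ᶜ,
              (C * (1 + ρ) ^ (-κ)) * P z := by
        apply setIntegral_mono_on hfg_int.integrableOn hint2 hs.compl
        intro z hz
        rw [Set.mem_compl_iff, mem_ball_zero_iff, not_lt] at hz
        have hgz : g z ≤ C * (1 + ρ) ^ (-κ) := by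
          apply mul_le_mul_of_nonneg_left _ hC
          exact Real.rpow_le_rpow_of_nonpos (by linarith) (by linarith) (by linarith)
        calc P z * g z ≤ P z * (C * (1 + ρ) ^ (-κ)) :=
              mul_le_mul_of_nonneg_left hgz (hP_nn z)
          _ = (C * (1 + ρ) ^ (-κ)) * P z := by ring
      refine hstep.trans ?_
      rw [MeasureTheory.integral_const_mul]
      have h1 : (∫ z in (Metric.ball (0 : EuclideanSpace ℝ (Fin d)) ρ)ᶜ, P z)
          ≤ ∫ z, P z := setIntegral_le_integral hP_int (ae_of_all _ hP_nn)
      have h2 : (∫ z, P z) = 1 := heat_mass d t ht x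
      have h3 : (0:ℝ) ≤ C * (1 + ρ) ^ (-κ) :=
        mul_nonneg hC (Real.rpow_nonneg (by linarith) _)
      calc C * (1 + ρ) ^ (-κ) * ∫ z in (Metric.ball (0 : EuclideanSpace ℝ (Fin d)) ρ)ᶜ, P z
          ≤ C * (1 + ρ) ^ (-κ) * 1 :=
            mul_le_mul_of_nonneg_left (h1.trans_eq h2) h3
        _ = C * (1 + ρ) ^ (-κ) := mul_one _
    linarith
  rcases le_or_gt (1 + ‖x‖) u with hcase | hcase
  · -- Case A : 1 + ‖x‖ ≤ √t
    have hu1 : (1:ℝ) ≤ u := by linarith [norm_nonneg x]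
    have hMb : ∀ z : EuclideanSpace ℝ (Fin d), ‖z‖ < u →
        P z ≤ (2*π*t) ^ (-(d:ℝ)/2) := by
      intro z hz
      have h1 : Real.exp (-‖x - z‖^2/(2*t)) ≤ 1 := by
        rw [Real.exp_le_one_iff]
        apply div_nonpos_of_nonpos_of_nonneg
        · simp only [neg_nonpos]; positivity
        · positivity
      calc P z = (2*π*t) ^ (-(d:ℝ)/2) * Real.exp (-‖x - z‖^2/(2*t)) := rfl
        _ ≤ (2*π*t) ^ (-(d:ℝ)/2) * 1 :=
            mul_le_mul_of_nonneg_left h1 (Real.rpow_nonneg (by positivity) _)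
        _ = (2*π*t) ^ (-(d:ℝ)/2) := mul_one _
    have h := split u hu0 _ (Real.rpow_nonneg (by positivity) _) hMb
    refine h.trans ?_
    have htu : t = u ^ 2 := (Real.sq_sqrt ht.le).symm
    have e1 : ((u^2 : ℝ)) ^ (-(d:ℝ)/2) = u ^ (-(d:ℝ)) := by
      rw [← Real.rpow_natCast u 2, ← Real.rpow_mul hu0.le]
      push_cast
      congr 1
      ring
    have e2 : u ^ (-(d:ℝ)) * u ^ ((d:ℝ) - κ) = u ^ (-κ) := by
      rw [← Real.rpow_add hu0]; ring_nf
    have hid : (2*π*t) ^ (-(d:ℝ)/2) * u ^ ((d:ℝ) - κ) = (2*π) ^ (-(d:ℝ)/2) * u ^ (-κ) := by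
      rw [htu, show (2*π*(u^2):ℝ) = (2*π) * u^2 by ring,
        Real.mul_rpow (by positivity) (by positivity), mul_assoc, e1, e2]
    have huaκ : u ^ (-κ) ≤ 2 ^ κ * a ^ (-κ) := by
      have hau : a ≤ 2 * u := by rw [ha]; linarith
      have e3 : ((2:ℝ) * u) ^ (-κ) = 2 ^ (-κ) * u ^ (-κ) :=
        Real.mul_rpow (by norm_num) hu0.le
      have e4 : (2:ℝ)^κ * 2^(-κ) = 1 := by
        rw [← Real.rpow_add (by norm_num : (0:ℝ) < 2)]; simp
      have h5 : ((2:ℝ)*u) ^ (-κ) ≤ a ^ (-κ) :=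
        Real.rpow_le_rpow_of_nonpos ha0 hau (by linarith)
      calc u ^ (-κ) = ((2:ℝ)^κ * 2^(-κ)) * u^(-κ) := by rw [e4, one_mul]
        _ = 2^κ * (((2:ℝ)*u) ^ (-κ)) := by rw [e3]; ring
        _ ≤ 2^κ * a^(-κ) := mul_le_mul_of_nonneg_left h5 h2κ
    have t1 : C * (1+u)^(-κ) ≤ C * u^(-κ) :=
      mul_le_mul_of_nonneg_left
        (Real.rpow_le_rpow_of_nonpos hu0 (by linarith) (by linarith)) hC
    have t2 : (2*π*t)^(-(d:ℝ)/2) * C * (Cb * u^((d:ℝ)-κ))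
        = (2*π)^(-(d:ℝ)/2) * (C*Cb) * u^(-κ) := by
      calc (2*π*t)^(-(d:ℝ)/2) * C * (Cb * u^((d:ℝ)-κ))
          = C * Cb * ((2*π*t)^(-(d:ℝ)/2) * u^((d:ℝ)-κ)) := by ring
        _ = C * Cb * ((2*π)^(-(d:ℝ)/2) * u^(-κ)) := by rw [hid]
        _ = (2*π)^(-(d:ℝ)/2) * (C*Cb) * u^(-κ) := by ring
    calc C * (1+u)^(-κ) + (2*π*t)^(-(d:ℝ)/2) * C * (Cb * u^((d:ℝ)-κ))
        ≤ C * u^(-κ) + (2*π)^(-(d:ℝ)/2) * (C*Cb) * u^(-κ) := by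
          rw [t2] at *
          exact add_le_add t1 le_rfl
      _ = (C + (2*π)^(-(d:ℝ)/2) * (C*Cb)) * u^(-κ) := by ring
      _ ≤ (C + (2*π)^(-(d:ℝ)/2) * (C*Cb)) * (2^κ * a^(-κ)) := by
          apply mul_le_mul_of_nonneg_left huaκ
          positivity
      _ = A1 * a^(-κ) := by rw [hA1]; ring
      _ ≤ (A1 + A2 + A3 + 1) * a^(-κ) :=
          mul_le_mul_of_nonneg_right (by linarith) haκ
  rcases le_or_gt ‖x‖ 1 with hx1 | hx1
  · -- Case B1 : √t < 1 + ‖x‖ and ‖x‖ ≤ 1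
    have ha4 : a ≤ 4 := by rw [ha]; linarith
    have hint : (∫ z, P z * g z) ≤ ∫ z, C * P z := by
      apply integral_mono_of_nonneg
      · exact ae_of_all _ fun z => mul_nonneg (hP_nn z) (hg_nn z)
      · exact hP_int.const_mul C
      · refine ae_of_all _ fun z => ?_
        calc P z * g z ≤ P z * C := mul_le_mul_of_nonneg_left (hg_le z) (hP_nn z)
          _ = C * P z := mul_comm _ _
    have e : (∫ z, C * P z) = C := by
      rw [MeasureTheory.integral_const_mul, heat_mass d t ht x, mul_one]
    have e4 : (4:ℝ)^κ * 4^(-κ) = 1 := by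
      rw [← Real.rpow_add (by norm_num : (0:ℝ) < 4)]; simp
    have h5 : (4:ℝ)^(-κ) ≤ a^(-κ) :=
      Real.rpow_le_rpow_of_nonpos ha0 ha4 (by linarith)
    calc (∫ z, P z * g z) ≤ C := hint.trans_eq e
      _ = (C * 4^κ) * 4^(-κ) := by rw [mul_assoc, e4, mul_one]
      _ ≤ (C * 4^κ) * a^(-κ) := mul_le_mul_of_nonneg_left h5 (by positivity)
      _ = A2 * a^(-κ) := by rw [hA2]
      _ ≤ (A1 + A2 + A3 + 1) * a^(-κ) :=
          mul_le_mul_of_nonneg_right (by linarith) haκ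
  · -- Case B2 : √t < 1 + ‖x‖ and 1 < ‖x‖
    have hx0 : (0:ℝ) < ‖x‖ := by linarith
    set ρ : ℝ := ‖x‖/2 with hρdef
    have hρ : 0 < ρ := by rw [hρdef]; linarith
    set s : ℝ := ‖x‖^2/(8*t) with hsdef
    have hs0 : 0 ≤ s := by positivity
    set M : ℝ := (2*π*t)^(-(d:ℝ)/2) * Real.exp (-s) with hMdef
    have hM0 : 0 ≤ M :=
      mul_nonneg (Real.rpow_nonneg (by positivity) _) (Real.exp_nonneg _)
    have hMb : ∀ z : EuclideanSpace ℝ (Fin d), ‖z‖ < ρ → P z ≤ M := by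
      intro z hz
      have h1 : ‖x‖/2 ≤ ‖x - z‖ := by
        have h := norm_sub_norm_le x z
        rw [hρdef] at hz
        linarith
      have h1sq : ‖x‖^2 ≤ 4*‖x - z‖^2 := by
        nlinarith [norm_nonneg x, norm_nonneg (x - z)]
      have h2 : ‖x‖^2/(8*t) ≤ ‖x - z‖^2/(2*t) := by
        rw [div_le_div_iff₀ (by positivity) (by positivity)]
        nlinarith [mul_le_mul_of_nonneg_right h1sq ht.le]
      have h3 : -‖x - z‖^2/(2*t) ≤ -s := by
        rw [hsdef, neg_div]
        exact neg_le_neg h2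
      calc P z = (2*π*t) ^ (-(d:ℝ)/2) * Real.exp (-‖x - z‖^2/(2*t)) := rfl
        _ ≤ (2*π*t) ^ (-(d:ℝ)/2) * Real.exp (-s) :=
            mul_le_mul_of_nonneg_left (Real.exp_le_exp.mpr h3)
              (Real.rpow_nonneg (by positivity) _)
        _ = M := rfl
    have h := split ρ hρ M hM0 hMb
    refine h.trans ?_
    -- bounds for the far term
    have hq : a/4 ≤ 1 + ρ := by rw [ha, hρdef]; linarith
    have e5 : ((a/4 : ℝ))^(-κ) = 4^κ * a^(-κ) := by
      rw [Real.div_rpow ha0.le (by norm_num),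
        Real.rpow_neg (by norm_num : (0:ℝ) ≤ 4), div_inv_eq_mul]
      ring
    have hterm1 : C * (1+ρ)^(-κ) ≤ C * 4^κ * a^(-κ) := by
      have h6 : (1+ρ)^(-κ) ≤ ((a/4 : ℝ))^(-κ) :=
        Real.rpow_le_rpow_of_nonpos (by positivity) hq (by linarith)
      calc C * (1+ρ)^(-κ) ≤ C * ((a/4 : ℝ))^(-κ) := mul_le_mul_of_nonneg_left h6 hC
        _ = C * 4^κ * a^(-κ) := by rw [e5]; ring
    -- bounds for the near term
    have hρx : ρ^((d:ℝ)-κ) ≤ ‖x‖^((d:ℝ)-κ) := by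
      apply Real.rpow_le_rpow (by positivity) _ (by linarith)
      rw [hρdef]; linarith
    have e6 : s ^ ((d:ℝ)/2) = ‖x‖^((d:ℝ)) * ((8*t):ℝ)^(-(d:ℝ)/2) := by
      rw [hsdef, div_eq_mul_inv, Real.mul_rpow (by positivity) (by positivity),
        ← Real.rpow_natCast ‖x‖ 2, ← Real.rpow_mul hx0.le,
        ← Real.rpow_neg_one ((8*t):ℝ), ← Real.rpow_mul (by positivity)]
      norm_num
      rw [show (2:ℝ) * ((d:ℝ)/2) = (d:ℝ) by ring, neg_div, Real.rpow_natCast]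
    have e7 : ((2*π*t):ℝ)^(-(d:ℝ)/2) = (2*π)^(-(d:ℝ)/2) * t^(-(d:ℝ)/2) := by
      rw [show ((2*π*t):ℝ) = (2*π)*t by ring, Real.mul_rpow (by positivity) ht.le]
    have e8 : ((8*t):ℝ)^(-(d:ℝ)/2) = (8:ℝ)^(-(d:ℝ)/2) * t^(-(d:ℝ)/2) :=
      Real.mul_rpow (by norm_num) ht.le
    have e9 : (8:ℝ)^((d:ℝ)/2) * (8:ℝ)^(-(d:ℝ)/2) = 1 := by
      rw [← Real.rpow_add (by norm_num : (0:ℝ) < 8),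
        show ((d:ℝ)/2 + -(d:ℝ)/2 : ℝ) = 0 by ring, Real.rpow_zero]
    have e10 : ‖x‖^((d:ℝ)-κ) = ‖x‖^((d:ℝ)) * ‖x‖^(-κ) := by
      rw [← Real.rpow_add hx0]; ring_nf
    have hid2 : ((2*π*t):ℝ)^(-(d:ℝ)/2) * ‖x‖^((d:ℝ)-κ)
        = (2*π)^(-(d:ℝ)/2) * ((8:ℝ)^((d:ℝ)/2) * s^((d:ℝ)/2)) * ‖x‖^(-κ) := by
      rw [e7, e10, e6, e8]
      calc (2*π)^(-(d:ℝ)/2) * t^(-(d:ℝ)/2) * (‖x‖^((d:ℝ)) * ‖x‖^(-κ))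
          = ((8:ℝ)^((d:ℝ)/2) * (8:ℝ)^(-(d:ℝ)/2)) *
            ((2*π)^(-(d:ℝ)/2) * t^(-(d:ℝ)/2) * (‖x‖^((d:ℝ)) * ‖x‖^(-κ))) := by
            rw [e9, one_mul]
        _ = (2*π)^(-(d:ℝ)/2) *
            ((8:ℝ)^((d:ℝ)/2) * (‖x‖^((d:ℝ)) * ((8:ℝ)^(-(d:ℝ)/2) * t^(-(d:ℝ)/2)))) *
            ‖x‖^(-κ) := by ring
    have hxa : ‖x‖^(-κ) ≤ 4^κ * a^(-κ) := by
      have hax : a/4 ≤ ‖x‖ := by rw [ha]; linarith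
      have h7 : ((a/4 : ℝ))^(-κ) ≥ ‖x‖^(-κ) :=
        Real.rpow_le_rpow_of_nonpos (by positivity) hax (by linarith)
      calc ‖x‖^(-κ) ≤ ((a/4 : ℝ))^(-κ) := h7
        _ = 4^κ * a^(-κ) := e5
    have hexp := hK s hs0
    have hterm2 : M * C * (Cb * ρ^((d:ℝ)-κ))
        ≤ (2*π)^(-(d:ℝ)/2) * (8:ℝ)^((d:ℝ)/2) * K * (C*Cb) * (4^κ * a^(-κ)) := by
      have step1 : M * C * (Cb * ρ^((d:ℝ)-κ)) ≤ M * C * (Cb * ‖x‖^((d:ℝ)-κ)) := by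
        apply mul_le_mul_of_nonneg_left (mul_le_mul_of_nonneg_left hρx hCb0)
          (mul_nonneg hM0 hC)
      have step2 : M * C * (Cb * ‖x‖^((d:ℝ)-κ))
          = (2*π)^(-(d:ℝ)/2) * (8:ℝ)^((d:ℝ)/2) * (C*Cb) * ‖x‖^(-κ) *
            (s^((d:ℝ)/2) * Real.exp (-s)) := by
        rw [hMdef]
        calc (2*π*t)^(-(d:ℝ)/2) * Real.exp (-s) * C * (Cb * ‖x‖^((d:ℝ)-κ))
            = C * Cb * Real.exp (-s) * (((2*π*t):ℝ)^(-(d:ℝ)/2) * ‖x‖^((d:ℝ)-κ)) := by ring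
          _ = C * Cb * Real.exp (-s) *
              ((2*π)^(-(d:ℝ)/2) * ((8:ℝ)^((d:ℝ)/2) * s^((d:ℝ)/2)) * ‖x‖^(-κ)) := by
              rw [hid2]
          _ = _ := by ring
      have step3 : (2*π)^(-(d:ℝ)/2) * (8:ℝ)^((d:ℝ)/2) * (C*Cb) * ‖x‖^(-κ) *
            (s^((d:ℝ)/2) * Real.exp (-s))
          ≤ (2*π)^(-(d:ℝ)/2) * (8:ℝ)^((d:ℝ)/2) * (C*Cb) * ‖x‖^(-κ) * K := by
        apply mul_le_mul_of_nonneg_left hexp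
        have := Real.rpow_nonneg hx0.le (-κ)
        positivity
      have step4 : (2*π)^(-(d:ℝ)/2) * (8:ℝ)^((d:ℝ)/2) * (C*Cb) * ‖x‖^(-κ) * K
          ≤ (2*π)^(-(d:ℝ)/2) * (8:ℝ)^((d:ℝ)/2) * K * (C*Cb) * (4^κ * a^(-κ)) := by
        have hK0 : (0:ℝ) ≤ K := by linarith
        calc (2*π)^(-(d:ℝ)/2) * (8:ℝ)^((d:ℝ)/2) * (C*Cb) * ‖x‖^(-κ) * K
            = (2*π)^(-(d:ℝ)/2) * (8:ℝ)^((d:ℝ)/2) * K * (C*Cb) * ‖x‖^(-κ) := by ring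
          _ ≤ _ := by
              apply mul_le_mul_of_nonneg_left hxa
              positivity
      calc M * C * (Cb * ρ^((d:ℝ)-κ)) ≤ M * C * (Cb * ‖x‖^((d:ℝ)-κ)) := step1
        _ = _ := step2
        _ ≤ _ := step3
        _ ≤ _ := step4
    calc C * (1+ρ)^(-κ) + M * C * (Cb * ρ^((d:ℝ)-κ))
        ≤ C * 4^κ * a^(-κ) +
          (2*π)^(-(d:ℝ)/2) * (8:ℝ)^((d:ℝ)/2) * K * (C*Cb) * (4^κ * a^(-κ)) :=
          add_le_add hterm1 hterm2
      _ = A3 * a^(-κ) := by rw [hA3]; ring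
      _ ≤ (A1 + A2 + A3 + 1) * a^(-κ) :=
          mul_le_mul_of_nonneg_right (by linarith) haκ
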